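/- Let H be a Hilbert space and (y_k) a sequence in H such that there is a constant C with ‖∑_{k=1}^{N} c_k y_k‖ ≤ C sup_k |c_k| for every bounded scalar sequence (c_k) and every N. Then the series ∑_{k=1}^{∞} y_k converges unconditionally in H. -/

import Mathlib

open Finset

noncomputable def signedSum {H : Type*} [NormedAddCommGroup H] [InnerProductSpace ℝ H]
    (u : ℕ → H) : ℕ → H
  | 0 => 0
  | j+1 => signedSum u j +
      (if 0 ≤ (inner ℝ (signedSum u j) (u j) : ℝ) then (1:ℝ) else -1) • u j

noncomputable def sgnSel {H : Type*} [NormedAddCommGroup H] [InnerProductSpace ℝ H]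
    (u : ℕ → H) (j : ℕ) : ℝ :=
  if 0 ≤ (inner ℝ (signedSum u j) (u j) : ℝ) then (1:ℝ) else -1

lemma sgnSel_pm {H : Type*} [NormedAddCommGroup H] [InnerProductSpace ℝ H]
    (u : ℕ → H) (j : ℕ) : sgnSel u j = 1 ∨ sgnSel u j = -1 := by
  unfold sgnSel; split <;> simp

lemma signedSum_succ {H : Type*} [NormedAddCommGroup H] [InnerProductSpace ℝ H]
    (u : ℕ → H) (j : ℕ) :
    signedSum u (j+1) = signedSum u j + sgnSel u j • u j := rfl

lemma signedSum_eq_sum {H : Type*} [NormedAddCommGroup H] [InnerProductSpace ℝ H]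
    (u : ℕ → H) (J : ℕ) :
    signedSum u J = ∑ j ∈ range J, sgnSel u j • u j := by
  induction J with
  | zero => simp [signedSum]
  | succ J ih => rw [signedSum_succ, ih, Finset.sum_range_succ]

lemma signedSum_sq_le {H : Type*} [NormedAddCommGroup H] [InnerProductSpace ℝ H]
    (u : ℕ → H) (J : ℕ) :
    ∑ j ∈ range J, ‖u j‖^2 ≤ ‖signedSum u J‖^2 := by
  induction J with
  | zero => simp [signedSum]
  | succ J ih =>
    rw [Finset.sum_range_succ, signedSum_succ]
    rw [norm_add_sq_real]
    have h1 : ‖sgnSel u J • u J‖ = ‖u J‖ := by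
      rcases sgnSel_pm u J with h | h <;> rw [h] <;> simp [norm_smul]
    have h2 : (0:ℝ) ≤ inner ℝ (signedSum u J) (sgnSel u J • u J) := by
      rw [real_inner_smul_right]
      unfold sgnSel
      split
      · simpa
      · rename_i h; nlinarith [le_of_not_ge h]
    rw [h1]
    nlinarith

theorem stmt_11 {H : Type*} [NormedAddCommGroup H] [InnerProductSpace ℝ H] [CompleteSpace H]
    (y : ℕ → H) (C : ℝ)
    (hC : ∀ c : ℕ → ℝ, (∃ M, ∀ k, |c k| ≤ M) →
      ∀ N : ℕ, ‖∑ k ∈ Finset.range N, c k • y k‖ ≤ C * (⨆ k, |c k|)) :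
    ∀ ε : ℕ → ℝ, (∀ k, ε k = 1 ∨ ε k = -1) →
      ∃ s : H, Filter.Tendsto (fun N => ∑ k ∈ Finset.range N, ε k • y k)
        Filter.atTop (nhds s) := by
  intro ε hε
  have hC0 : 0 ≤ C := by
    have := hC (fun _ => 1) ⟨1, fun k => by norm_num⟩ 0
    simpa using this
  set S : ℕ → H := fun N => ∑ k ∈ Finset.range N, ε k • y k with hS
  suffices hcs : CauchySeq S by
    exact cauchySeq_tendsto_of_complete hcs
  by_contra hnot
  rw [Metric.cauchySeq_iff] at hnot
  push_neg at hnot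
  obtain ⟨δ, hδ, hblock⟩ := hnot
  have key : ∀ N, ∃ m, N < m ∧ δ/2 ≤ ‖S m - S N‖ := by
    intro N
    obtain ⟨m, hm, n, hn, hd⟩ := hblock N
    rw [dist_eq_norm] at hd
    have htri : ‖S m - S n‖ ≤ ‖S m - S N‖ + ‖S n - S N‖ := by
      have : S m - S n = (S m - S N) - (S n - S N) := by abel
      rw [this]; exact norm_sub_le _ _
    have : δ/2 ≤ ‖S m - S N‖ ∨ δ/2 ≤ ‖S n - S N‖ := by
      by_contra hcon; push_neg at hcon; linarith [hcon.1, hcon.2]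
    rcases this with h | h
    · refine ⟨m, ?_, h⟩
      rcases lt_or_eq_of_le hm with h' | h'
      · exact h'
      · exfalso; rw [← h'] at h; simp at h; linarith
    · refine ⟨n, ?_, h⟩
      rcases lt_or_eq_of_le hn with h' | h'
      · exact h'
      · exfalso; rw [← h'] at h; simp at h; linarith
  choose g hg1 hg2 using key
  set n : ℕ → ℕ := fun j => g^[j] 0 with hn
  have hnsucc : ∀ j, n (j+1) = g (n j) := fun j => Function.iterate_succ_apply' g j 0
  have hmono : StrictMono n := by
    apply strictMono_nat_of_lt_succ
    intro j; rw [hnsucc]; exact hg1 (n j)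
  set u : ℕ → H := fun j => S (n (j+1)) - S (n j) with hu
  have hunorm : ∀ j, δ/2 ≤ ‖u j‖ := by
    intro j; rw [hu]; simp only; rw [hnsucc]; exact hg2 (n j)
  have hublock : ∀ j, u j = ∑ k ∈ Finset.Ico (n j) (n (j+1)), ε k • y k := by
    intro j
    rw [hu]; simp only [hS]
    rw [Finset.sum_Ico_eq_sub _ (le_of_lt (hmono (Nat.lt_succ_self j)))]
  set η := sgnSel u with hη
  set J : ℕ := ⌈4*C^2/δ^2⌉₊ + 1 with hJ
  set c : ℕ → ℝ := fun k =>
    ∑ j ∈ range J, (if n j ≤ k ∧ k < n (j+1) then η j * ε k else 0) with hc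
  have hdisj : ∀ k, ((range J).filter (fun j => n j ≤ k ∧ k < n (j+1))).card ≤ 1 := by
    intro k
    rw [Finset.card_le_one]
    intro a ha b hb
    simp only [Finset.mem_filter] at ha hb
    by_contra hab
    rcases Nat.lt_or_ge a b with h | h
    · have : n (a+1) ≤ n b := hmono.monotone (by omega)
      omega
    · have hba : b < a := by omega
      have : n (b+1) ≤ n a := hmono.monotone (by omega)
      omega
  have hcabs : ∀ k, |c k| ≤ 1 := by
    intro k
    have hck : c k = ∑ j ∈ (range J).filter (fun j => n j ≤ k ∧ k < n (j+1)), η j * ε k := by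
      rw [hc]; simp only
      rw [Finset.sum_filter]
    rw [hck]
    rcases Nat.le_one_iff_eq_zero_or_eq_one.mp (hdisj k) with h0 | h1
    · rw [Finset.card_eq_zero.mp h0]; simp
    · obtain ⟨j0, hj0⟩ := Finset.card_eq_one.mp h1
      rw [hj0, Finset.sum_singleton, abs_mul]
      have e1 : |η j0| = 1 := by rcases sgnSel_pm u j0 with h | h <;> rw [hη, h] <;> norm_num
      have e2 : |ε k| = 1 := by rcases hε k with h | h <;> rw [h] <;> norm_num
      rw [e1, e2]; norm_num
  -- sum identity: ∑_{k < n J} c k • y k = signedSum u J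
  have hsum : ∑ k ∈ range (n J), c k • y k = signedSum u J := by
    rw [signedSum_eq_sum]
    have : ∑ k ∈ range (n J), c k • y k
        = ∑ j ∈ range J, ∑ k ∈ range (n J),
            (if n j ≤ k ∧ k < n (j+1) then η j * ε k else 0) • y k := by
      rw [Finset.sum_comm]
      apply Finset.sum_congr rfl
      intro k _
      rw [hc]; simp only
      rw [Finset.sum_smul]
    rw [this]
    apply Finset.sum_congr rfl
    intro j hj
    have hjJ : j < J := Finset.mem_range.mp hj
    have hsub : n (j+1) ≤ n J := hmono.monotone hjJ
    have : ∑ k ∈ range (n J), (if n j ≤ k ∧ k < n (j+1) then η j * ε k else 0) • y k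
        = ∑ k ∈ Finset.Ico (n j) (n (j+1)), (η j * ε k) • y k := by
      rw [← Finset.sum_filter_add_sum_filter_not (range (n J)) (fun k => n j ≤ k ∧ k < n (j+1))]
      have e1 : (range (n J)).filter (fun k => n j ≤ k ∧ k < n (j+1))
          = Finset.Ico (n j) (n (j+1)) := by
        ext k
        simp only [Finset.mem_filter, Finset.mem_range, Finset.mem_Ico]
        omega
      have e2 : ∑ k ∈ (range (n J)).filter (fun k => ¬(n j ≤ k ∧ k < n (j+1))),
          (if n j ≤ k ∧ k < n (j+1) then η j * ε k else 0) • y k = 0 := by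
        apply Finset.sum_eq_zero
        intro k hk
        simp only [Finset.mem_filter] at hk
        rw [if_neg hk.2, zero_smul]
      rw [e2, add_zero, e1]
      apply Finset.sum_congr rfl
      intro k hk
      rw [Finset.mem_Ico] at hk
      rw [if_pos hk]
    rw [this, hublock j, Finset.smul_sum]
    apply Finset.sum_congr rfl
    intro k _
    rw [smul_smul]
  -- now the bound
  have hbound : ‖signedSum u J‖ ≤ C := by
    rw [← hsum]
    have h1 := hC c ⟨1, hcabs⟩ (n J)
    have h2 : (⨆ k, |c k|) ≤ 1 := Real.iSup_le hcabs zero_le_one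
    calc ‖∑ k ∈ range (n J), c k • y k‖ ≤ C * (⨆ k, |c k|) := h1
      _ ≤ C * 1 := by apply mul_le_mul_of_nonneg_left h2 hC0
      _ = C := mul_one C
  have hsq := signedSum_sq_le u J
  have hlow : (J : ℝ) * (δ/2)^2 ≤ ∑ j ∈ range J, ‖u j‖^2 := by
    have : ∀ j ∈ range J, (δ/2)^2 ≤ ‖u j‖^2 := by
      intro j _
      have := hunorm j
      nlinarith [hδ]
    calc (J : ℝ) * (δ/2)^2 = ∑ _j ∈ range J, (δ/2)^2 := by
          rw [Finset.sum_const, Finset.card_range, nsmul_eq_mul]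
      _ ≤ ∑ j ∈ range J, ‖u j‖^2 := Finset.sum_le_sum this
  have hJbig : 4*C^2/δ^2 < (J : ℝ) := by
    rw [hJ]
    push_cast
    have := Nat.le_ceil (4*C^2/δ^2)
    linarith
  have hnormsq : ‖signedSum u J‖^2 ≤ C^2 := by
    nlinarith [norm_nonneg (signedSum u J)]
  have hfin : (J : ℝ) * (δ/2)^2 ≤ C^2 := le_trans hlow (le_trans hsq hnormsq)
  have hδ2 : (0:ℝ) < δ^2 := by positivity
  rw [div_lt_iff₀ hδ2] at hJbig
  nlinarith [hfin, hδ]
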